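/- Let (ξₙ)_{n≥1} be an i.i.d. sequence of standard normal random variables on a probability space (Ω, P). For N ≥ 2 let M_N := max_{1 ≤ i ≤ N} ξᵢ, let S_N := min over i ≤ N of (max over j ≤ N with j ≠ i of ξⱼ) be the second largest value among ξ₁, …, ξ_N, and let q_N := Φ⁻¹(1 − 1/N). Then M_N − S_N = O_p(1/q_N): for every δ > 0 there exists C > 0 such that limsup_{N→∞} P( q_N·(M_N − S_N) > C ) ≤ δ. -/

import Mathlib

open MeasureTheory ProbabilityTheory Filter

lemma erase_range_nonempty (N i : ℕ) :
    ((Finset.range (N + 2)).erase i).Nonempty := by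
  rcases eq_or_ne i 0 with h | h
  · exact ⟨1, Finset.mem_erase.mpr ⟨by omega, Finset.mem_range.mpr (by omega)⟩⟩
  · exact ⟨0, Finset.mem_erase.mpr ⟨Ne.symm h, Finset.mem_range.mpr (by omega)⟩⟩

open scoped ENNReal NNReal

noncomputable def gTail (t : ℝ) : ℝ := ∫ x in Set.Ioi t, gaussianPDFReal 0 1 x

lemma gTail_nonneg (t : ℝ) : 0 ≤ gTail t :=
  setIntegral_nonneg measurableSet_Ioi fun x _ => gaussianPDFReal_nonneg _ _ _

lemma gaussianReal_Ioi (t : ℝ) :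
    gaussianReal 0 1 (Set.Ioi t) = ENNReal.ofReal (gTail t) :=
  gaussianReal_apply_eq_integral 0 one_ne_zero _

lemma cdf_add_gTail (t : ℝ) : cdf (gaussianReal 0 1) t + gTail t = 1 := by
  have h1 : gaussianReal 0 1 (Set.Iic t) + gaussianReal 0 1 (Set.Ioi t) = 1 := by
    rw [← Set.compl_Iic]
    rw [measure_add_measure_compl measurableSet_Iic, measure_univ]
  calc cdf (gaussianReal 0 1) t + gTail t
      = (gaussianReal 0 1 (Set.Iic t)).toReal + (gaussianReal 0 1 (Set.Ioi t)).toReal := by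
        rw [cdf_eq_real, measureReal_def, gaussianReal_Ioi, ENNReal.toReal_ofReal (gTail_nonneg t)]
    _ = ((gaussianReal 0 1 (Set.Iic t)) + (gaussianReal 0 1 (Set.Ioi t))).toReal :=
        (ENNReal.toReal_add (measure_ne_top _ _) (measure_ne_top _ _)).symm
    _ = 1 := by rw [h1]; simp

lemma gTail_le_one (t : ℝ) : gTail t ≤ 1 := by
  have := cdf_add_gTail t
  have := cdf_nonneg (μ := gaussianReal 0 1) t
  linarith

lemma gIic (t : ℝ) : ∫ x in Set.Iic t, gaussianPDFReal 0 1 x = 1 - gTail t := by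
  have h1 : gaussianReal 0 1 (Set.Iic t)
      = ENNReal.ofReal (∫ x in Set.Iic t, gaussianPDFReal 0 1 x) :=
    gaussianReal_apply_eq_integral 0 one_ne_zero _
  have h2 : (gaussianReal 0 1 (Set.Iic t)).toReal = ∫ x in Set.Iic t, gaussianPDFReal 0 1 x := by
    rw [h1, ENNReal.toReal_ofReal
      (setIntegral_nonneg measurableSet_Iic fun x _ => gaussianPDFReal_nonneg _ _ _)]
  have h3 := cdf_add_gTail t
  rw [cdf_eq_real, measureReal_def, h2] at h3
  linarith

lemma integrable_pdf_shift (h : ℝ) : Integrable (fun x => gaussianPDFReal 0 1 (x + h)) := by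
  have : (fun x => gaussianPDFReal 0 1 (x + h)) = gaussianPDFReal (0 - h) 1 :=
    funext fun x => gaussianPDFReal_add x h
  rw [this]
  exact integrable_gaussianPDFReal _ _

lemma gTail_shift (t h : ℝ) :
    ∫ x in Set.Ioi t, gaussianPDFReal 0 1 (x + h) = gTail (t + h) := by
  have key := MeasureTheory.integral_add_right_eq_self (μ := volume)
    ((Set.Ioi (t + h)).indicator (gaussianPDFReal 0 1)) h
  rw [gTail, ← integral_indicator measurableSet_Ioi, ← integral_indicator measurableSet_Ioi,
    ← key]
  congr 1
  funext x
  by_cases hx : t < x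
  · rw [Set.indicator_of_mem (Set.mem_Ioi.mpr hx),
      Set.indicator_of_mem (Set.mem_Ioi.mpr (by linarith))]
  · rw [Set.indicator_of_notMem (fun hc => hx (Set.mem_Ioi.mp hc)),
      Set.indicator_of_notMem (fun hc => hx (by have := Set.mem_Ioi.mp hc; linarith))]

lemma pdf_shift_eq (x h : ℝ) : gaussianPDFReal 0 1 (x + h)
    = gaussianPDFReal 0 1 x * Real.exp (-(x * h) - h ^ 2 / 2) := by
  simp only [gaussianPDFReal, NNReal.coe_one, mul_one, sub_zero]
  rw [mul_assoc, ← Real.exp_add]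
  congr 1
  ring

lemma gTail_pos (t : ℝ) : 0 < gTail t := by
  rw [gTail]
  refine (setIntegral_pos_iff_support_of_nonneg_ae
    (ae_of_all _ fun x => gaussianPDFReal_nonneg _ _ _)
    ((integrable_gaussianPDFReal 0 1).integrableOn)).2 ?_
  have hsupp : Function.support (gaussianPDFReal 0 1) = Set.univ :=
    Set.eq_univ_of_forall fun x => (gaussianPDFReal_pos 0 1 x one_ne_zero).ne'
  rw [hsupp, Set.univ_inter, Real.volume_Ioi]
  exact ENNReal.zero_lt_top

lemma gTail_anti {s t : ℝ} (hst : s ≤ t) : gTail t ≤ gTail s :=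
  setIntegral_mono_set ((integrable_gaussianPDFReal 0 1).integrableOn)
    (ae_of_all _ fun x => gaussianPDFReal_nonneg _ _ _)
    (HasSubset.Subset.eventuallyLE (Set.Ioi_subset_Ioi hst))

lemma gTail_upper {q h : ℝ} (hq : 0 ≤ q) (hh : 0 ≤ h) :
    gTail (q + h) ≤ Real.exp (-(q * h)) * gTail q := by
  rw [← gTail_shift]
  calc ∫ x in Set.Ioi q, gaussianPDFReal 0 1 (x + h)
      ≤ ∫ x in Set.Ioi q, Real.exp (-(q * h)) * gaussianPDFReal 0 1 x := by
        refine setIntegral_mono_on ((integrable_pdf_shift h).integrableOn)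
          (((integrable_gaussianPDFReal 0 1).const_mul _).integrableOn)
          measurableSet_Ioi fun x hx => ?_
        have hx' : q < x := hx
        rw [pdf_shift_eq, mul_comm (Real.exp (-(q * h)))]
        exact mul_le_mul_of_nonneg_left
          (Real.exp_le_exp.mpr (by nlinarith [mul_le_mul_of_nonneg_right hx'.le hh]))
          (gaussianPDFReal_nonneg _ _ _)
    _ = Real.exp (-(q * h)) * gTail q := integral_const_mul _ _

lemma gTail_lower {q h : ℝ} (hh : 0 ≤ h) :
    Real.exp (q * h - h ^ 2 / 2) * gTail q ≤ gTail (q - h) := by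
  have : q - h = q + (-h) := by ring
  rw [this, ← gTail_shift]
  calc Real.exp (q * h - h ^ 2 / 2) * gTail q
      = ∫ x in Set.Ioi q, Real.exp (q * h - h ^ 2 / 2) * gaussianPDFReal 0 1 x :=
        (integral_const_mul _ _).symm
    _ ≤ ∫ x in Set.Ioi q, gaussianPDFReal 0 1 (x + (-h)) := by
        refine setIntegral_mono_on
          (((integrable_gaussianPDFReal 0 1).const_mul _).integrableOn)
          ((integrable_pdf_shift (-h)).integrableOn)
          measurableSet_Ioi fun x hx => ?_
        have hx' : q < x := hx
        rw [pdf_shift_eq, mul_comm (gaussianPDFReal 0 1 x)]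
        exact mul_le_mul_of_nonneg_right
          (Real.exp_le_exp.mpr (by nlinarith [mul_le_mul_of_nonneg_right hx'.le hh]))
          (gaussianPDFReal_nonneg _ _ _)


set_option maxHeartbeats 1600000 in
/-- **Lemma 1 (Gaussian maxima and spacing), spacing claim.** Let `(ξₙ)` be an i.i.d.
sequence of standard normal random variables, `M_N` the maximum and `S_N` the second
largest value among the first `N` of them (here realized over the `N + 2` variables
`ξ₀, …, ξ_{N+1}`; the second largest is the minimum over indices `i` of the maximum of
the family with index `i` removed), and `q_N = Φ⁻¹(1 − 1/N)`. Then
`M_N − S_N = O_p(1/q_N)`: for every `δ > 0` there is `C > 0` with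
`limsup_N P(q_N (M_N − S_N) > C) ≤ δ`. -/
theorem gaussian_max_spacing
    {Ω : Type*} [MeasurableSpace Ω] (P : Measure Ω) [IsProbabilityMeasure P]
    (ξ : ℕ → Ω → ℝ)
    (hmeas : ∀ i, Measurable (ξ i))
    (hindep : iIndepFun ξ P)
    (hlaw : ∀ i, Measure.map (ξ i) P = gaussianReal 0 1)
    (q : ℕ → ℝ)
    (hq : ∀ N : ℕ, 2 ≤ N → cdf (gaussianReal 0 1) (q N) = 1 - 1 / (N : ℝ)) :
    ∀ δ > (0 : ℝ), ∃ C > (0 : ℝ),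
      Filter.limsup
        (fun N : ℕ =>
          (P {ω | C < q (N + 2) *
              ((Finset.range (N + 2)).sup' Finset.nonempty_range_add_one
                  (fun i => ξ i ω) -
                (Finset.range (N + 2)).inf' Finset.nonempty_range_add_one
                  (fun i => ((Finset.range (N + 2)).erase i).sup'
                    (erase_range_nonempty N i) (fun j => ξ j ω)))}).toReal)
        atTop ≤ δ := by
  intro δ hδ
  set T : ℝ := max 2 (64 / δ) with hT_def
  have hT2 : (2:ℝ) ≤ T := le_max_left _ _
  have hTpos : (0:ℝ) < T := lt_of_lt_of_le two_pos hT2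
  have hTδ : 32 / T ≤ δ / 2 := by
    rw [div_le_div_iff₀ hTpos two_pos]
    have h64 : 64 / δ ≤ T := le_max_right _ _
    have := (div_le_iff₀ hδ).mp h64
    linarith
  set b : ℝ := 2 * Real.log T with hb_def
  have hb_pos : 0 < b := by
    have : 0 < Real.log T := Real.log_pos (by linarith)
    rw [hb_def]; linarith
  have hexpb : Real.exp (b / 2) = T := by
    rw [show b / 2 = Real.log T by rw [hb_def]; ring]
    exact Real.exp_log hTpos
  set a : ℝ := max 1 (Real.log (2 / δ)) with ha_def
  have ha1 : (1:ℝ) ≤ a := le_max_left _ _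
  have hea : Real.exp (-a) ≤ δ / 2 := by
    have h1 : Real.log (2 / δ) ≤ a := le_max_right _ _
    have h2 : Real.exp (-a) ≤ Real.exp (-(Real.log (2 / δ))) :=
      Real.exp_le_exp.mpr (by linarith)
    have h3 : Real.exp (-(Real.log (2 / δ))) = δ / 2 := by
      rw [Real.exp_neg, Real.exp_log (by positivity), inv_div]
    linarith
  refine ⟨a + b, by linarith, ?_⟩
  set K : ℝ := 1 + Real.sqrt b with hK_def
  have hKpos : (0:ℝ) < K := by rw [hK_def]; positivity
  obtain ⟨N₀, hN₀⟩ := exists_nat_gt (1 / gTail K)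
  apply Filter.limsup_le_of_le (isCoboundedUnder_le_of_le atTop fun N => ENNReal.toReal_nonneg)
  filter_upwards [Filter.eventually_ge_atTop N₀] with N hN
  set n : ℕ := N + 2 with hn_def
  have hn2 : 2 ≤ n := by omega
  have hnR : (0:ℝ) < (n:ℝ) := by positivity
  have hIq : gTail (q n) = 1 / (n:ℝ) := by
    have h1 := hq n hn2
    have h2 := cdf_add_gTail (q n)
    linarith
  have hqK : K ≤ q n := by
    by_contra hlt
    push_neg at hlt
    have h1 : gTail K ≤ gTail (q n) := gTail_anti hlt.le
    have hg := gTail_pos K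
    rw [div_lt_iff₀ hg] at hN₀
    have h2 : (N₀ : ℝ) ≤ (n : ℝ) := by
      have : N₀ ≤ n := by omega
      exact_mod_cast this
    have h3 : 1 / (n:ℝ) < gTail K := by
      rw [div_lt_iff₀ hnR]
      nlinarith
    rw [hIq] at h1
    linarith
  have hqpos : 0 < q n := lt_of_lt_of_le hKpos hqK
  have hsb : Real.sqrt b ≤ q n := by
    rw [hK_def] at hqK; linarith
  have hqb : b ≤ (q n)^2 := by
    nlinarith [Real.sq_sqrt hb_pos.le, Real.sqrt_nonneg b]
  set A : ℝ := q n + a / q n with hA_def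
  set B : ℝ := q n - b / q n with hB_def
  set p : ℝ := gTail B with hp_def
  have hp0 : 0 ≤ p := gTail_nonneg B
  have hp1 : p ≤ 1 := gTail_le_one B
  have h1p : (0:ℝ) ≤ 1 - p := by linarith
  have hmapP : ∀ (i : ℕ) (s : Set ℝ), MeasurableSet s →
      P (ξ i ⁻¹' s) = ENNReal.ofReal (∫ x in s, gaussianPDFReal 0 1 x) := by
    intro i s hs
    rw [← Measure.map_apply (hmeas i) hs, hlaw i,
      gaussianReal_apply_eq_integral 0 one_ne_zero]
  have hIoiP : ∀ (i : ℕ) (t : ℝ), P (ξ i ⁻¹' Set.Ioi t) = ENNReal.ofReal (gTail t) :=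
    fun i t => hmapP i _ measurableSet_Ioi
  have hIicP : ∀ (i : ℕ) (t : ℝ), P (ξ i ⁻¹' Set.Iic t) = ENNReal.ofReal (1 - gTail t) := by
    intro i t; rw [hmapP i _ measurableSet_Iic, gIic]
  set E1 : Set Ω := ⋃ i ∈ Finset.range n, ξ i ⁻¹' Set.Ioi A with hE1_def
  set E0 : Set Ω := ⋂ i ∈ Finset.range n, ξ i ⁻¹' Set.Iic B with hE0_def
  set E2 : ℕ → Set Ω := fun i => ⋂ j ∈ Finset.range n,
    ξ j ⁻¹' (if j = i then Set.Ioi B else Set.Iic B) with hE2_def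
  -- the key inclusion
  have hq2 : q n * (A - B) = a + b := by
    rw [hA_def, hB_def]
    field_simp
    ring
  refine ENNReal.toReal_le_of_le_ofReal hδ.le ?_
  refine le_trans (measure_mono
    (?_ : _ ⊆ E1 ∪ (E0 ∪ ⋃ i ∈ Finset.range n, E2 i))) ?_
  · intro ω hω
    simp only [Set.mem_setOf_eq] at hω
    by_cases h1 : ∀ i ∈ Finset.range n, ξ i ω ≤ A
    · right
      have hM : (Finset.range n).sup' Finset.nonempty_range_add_one (fun i => ξ i ω) ≤ A :=
        Finset.sup'_le _ _ h1
      have hS : (Finset.range n).inf' Finset.nonempty_range_add_one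
          (fun i => ((Finset.range n).erase i).sup' (erase_range_nonempty N i)
            (fun j => ξ j ω)) < B := by
        by_contra hS
        push_neg at hS
        have hmul : q n * ((Finset.range n).sup' Finset.nonempty_range_add_one (fun i => ξ i ω) -
            (Finset.range n).inf' Finset.nonempty_range_add_one
              (fun i => ((Finset.range n).erase i).sup' (erase_range_nonempty N i)
                (fun j => ξ j ω))) ≤ q n * (A - B) :=
          mul_le_mul_of_nonneg_left (by linarith) hqpos.le
        rw [hq2] at hmul
        linarith
      rw [Finset.inf'_lt_iff] at hS
      obtain ⟨i, hi, hsup⟩ := hS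
      rw [Finset.sup'_lt_iff] at hsup
      by_cases h2 : ξ i ω ≤ B
      · left
        rw [hE0_def]
        simp only [Set.mem_iInter, Set.mem_preimage, Set.mem_Iic]
        intro j hj
        rcases eq_or_ne j i with rfl | hne
        · exact h2
        · exact le_of_lt (hsup j (Finset.mem_erase.mpr ⟨hne, hj⟩))
      · refine Or.inr (Set.mem_biUnion hi ?_)
        simp only [hE2_def, Set.mem_iInter, Set.mem_preimage]
        intro j hj
        rcases eq_or_ne j i with rfl | hne
        · simp only [if_pos rfl, Set.mem_Ioi]
          exact lt_of_not_ge h2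
        · simp only [if_neg hne, Set.mem_Iic]
          exact le_of_lt (hsup j (Finset.mem_erase.mpr ⟨hne, hj⟩))
    · push_neg at h1
      obtain ⟨i, hi, hAi⟩ := h1
      exact Or.inl (Set.mem_biUnion hi hAi)
  -- measure bounds
  have hPE1 : P E1 ≤ ENNReal.ofReal ((n:ℝ) * gTail A) := by
    calc P E1 ≤ ∑ i ∈ Finset.range n, P (ξ i ⁻¹' Set.Ioi A) :=
          measure_biUnion_finset_le _ _
      _ = (n : ℝ≥0∞) * ENNReal.ofReal (gTail A) := by
          rw [Finset.sum_congr rfl (fun i _ => hIoiP i A), Finset.sum_const,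
            Finset.card_range, nsmul_eq_mul]
      _ = ENNReal.ofReal ((n:ℝ) * gTail A) := by
          rw [ENNReal.ofReal_mul (by positivity : (0:ℝ) ≤ (n:ℝ)), ENNReal.ofReal_natCast]
  have hPE0 : P E0 = ENNReal.ofReal ((1 - p) ^ n) := by
    rw [hE0_def, hindep.measure_inter_preimage_eq_mul (Finset.range n)
      (sets := fun _ => Set.Iic B) (fun i _ => measurableSet_Iic)]
    rw [Finset.prod_congr rfl (fun i _ => hIicP i B), Finset.prod_const, Finset.card_range,
      ← ENNReal.ofReal_pow h1p]
  have hPE2 : ∀ i ∈ Finset.range n, P (E2 i) = ENNReal.ofReal (p * (1 - p) ^ (n - 1)) := by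
    intro i hi
    rw [hE2_def]
    rw [hindep.measure_inter_preimage_eq_mul (Finset.range n)
      (sets := fun j => if j = i then Set.Ioi B else Set.Iic B)
      (fun j _ => by
        show MeasurableSet (if j = i then Set.Ioi B else Set.Iic B)
        by_cases hji : j = i
        · rw [if_pos hji]; exact measurableSet_Ioi
        · rw [if_neg hji]; exact measurableSet_Iic)]
    rw [← Finset.mul_prod_erase _ _ hi, if_pos rfl, hIoiP]
    have hrest : ∀ j ∈ (Finset.range n).erase i,
        P (ξ j ⁻¹' (if j = i then Set.Ioi B else Set.Iic B)) = ENNReal.ofReal (1 - p) := by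
      intro j hj
      rw [if_neg (Finset.mem_erase.mp hj).1, hIicP]
    rw [Finset.prod_congr rfl hrest, Finset.prod_const, Finset.card_erase_of_mem hi,
      Finset.card_range, ← ENNReal.ofReal_pow h1p, ← ENNReal.ofReal_mul hp0]
  have hPU : P (⋃ i ∈ Finset.range n, E2 i)
      ≤ ENNReal.ofReal ((n:ℝ) * (p * (1 - p) ^ (n - 1))) := by
    calc P (⋃ i ∈ Finset.range n, E2 i) ≤ ∑ i ∈ Finset.range n, P (E2 i) :=
          measure_biUnion_finset_le _ _
      _ = (n:ℝ≥0∞) * ENNReal.ofReal (p * (1 - p) ^ (n - 1)) := by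
          rw [Finset.sum_congr rfl hPE2, Finset.sum_const, Finset.card_range, nsmul_eq_mul]
      _ = ENNReal.ofReal ((n:ℝ) * (p * (1 - p) ^ (n - 1))) := by
          rw [ENNReal.ofReal_mul (by positivity : (0:ℝ) ≤ (n:ℝ)), ENNReal.ofReal_natCast]
  -- the real-number estimates
  have hga : (n:ℝ) * gTail A ≤ Real.exp (-a) := by
    have h := gTail_upper hqpos.le (show 0 ≤ a / q n by positivity)
    have harg : q n * (a / q n) = a := by field_simp
    rw [harg, hIq] at h
    calc (n:ℝ) * gTail A ≤ (n:ℝ) * (Real.exp (-a) * (1 / (n:ℝ))) :=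
          mul_le_mul_of_nonneg_left h (by positivity)
      _ = Real.exp (-a) := by field_simp
  set m : ℝ := (n:ℝ) * p with hm_def
  have hmT : T ≤ m := by
    have h := gTail_lower (q := q n) (h := b / q n) (by positivity)
    have harg : q n * (b / q n) = b := by field_simp
    rw [harg, hIq] at h
    have hbq : (b / q n) ^ 2 ≤ b := by
      rw [div_pow, div_le_iff₀ (by positivity : (0:ℝ) < (q n)^2)]
      nlinarith
    have harg2 : Real.exp (b / 2) ≤ Real.exp (b - (b / q n) ^ 2 / 2) :=
      Real.exp_le_exp.mpr (by linarith)
    have hTn : T / (n:ℝ) ≤ p := by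
      calc T / (n:ℝ) = Real.exp (b / 2) * (1 / (n:ℝ)) := by rw [hexpb]; ring
        _ ≤ Real.exp (b - (b / q n) ^ 2 / 2) * (1 / (n:ℝ)) :=
            mul_le_mul_of_nonneg_right harg2 (by positivity)
        _ ≤ p := h
    calc T = (n:ℝ) * (T / (n:ℝ)) := by field_simp
      _ ≤ (n:ℝ) * p := mul_le_mul_of_nonneg_left hTn (by positivity)
  have hm2 : (2:ℝ) ≤ m := le_trans hT2 hmT
  have hpow : (1 - p) ^ (n - 1) ≤ Real.exp (-(m / 2)) := by
    calc (1 - p) ^ (n - 1) ≤ Real.exp (-p) ^ (n - 1) :=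
          pow_le_pow_left₀ h1p (by linarith [Real.add_one_le_exp (-p)]) _
      _ = Real.exp (((n - 1 : ℕ) : ℝ) * (-p)) := (Real.exp_nat_mul _ _).symm
      _ ≤ Real.exp (-(m / 2)) := by
          apply Real.exp_le_exp.mpr
          have hc : ((n - 1 : ℕ) : ℝ) = (n:ℝ) - 1 := by
            rw [Nat.cast_sub (by omega : 1 ≤ n)]
            norm_num
          rw [hc, hm_def]
          nlinarith
  have hpn : (1 - p) ^ n ≤ (1 - p) ^ (n - 1) :=
    pow_le_pow_of_le_one h1p (by linarith) (by omega)
  have hexpneg : Real.exp (-(m / 2)) ≤ 16 / m ^ 2 := by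
    have hexp4 : m / 4 ≤ Real.exp (m / 4) := by linarith [Real.add_one_le_exp (m / 4)]
    have he : Real.exp (m / 2) = Real.exp (m / 4) ^ 2 := by
      rw [sq, ← Real.exp_add]; ring_nf
    have hsq : m ^ 2 / 16 ≤ Real.exp (m / 2) := by
      rw [he]; nlinarith [Real.exp_pos (m / 4)]
    rw [Real.exp_neg]
    have h1 : (0:ℝ) < m ^ 2 / 16 := by positivity
    calc (Real.exp (m / 2))⁻¹ ≤ (m ^ 2 / 16)⁻¹ := inv_anti₀ h1 hsq
      _ = 16 / m ^ 2 := by rw [inv_div]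
  have hsecond : (1 - p) ^ n + (n:ℝ) * (p * (1 - p) ^ (n - 1)) ≤ δ / 2 := by
    have hmm : (n:ℝ) * (p * (1 - p) ^ (n - 1)) = m * (1 - p) ^ (n - 1) := by
      rw [hm_def]; ring
    rw [hmm]
    have hc1 : (1 - p) ^ n + m * (1 - p) ^ (n - 1) ≤ (1 + m) * (1 - p) ^ (n - 1) := by
      nlinarith [pow_nonneg h1p (n - 1)]
    have hc2 : (1 + m) * (1 - p) ^ (n - 1) ≤ (1 + m) * Real.exp (-(m / 2)) :=
      mul_le_mul_of_nonneg_left hpow (by linarith)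
    have hc3 : (1 + m) * Real.exp (-(m / 2)) ≤ 2 * m * (16 / m ^ 2) := by
      apply mul_le_mul (by linarith) hexpneg (Real.exp_nonneg _) (by linarith)
    have hc4 : 2 * m * (16 / m ^ 2) = 32 / m := by
      field_simp; ring
    have hc5 : 32 / m ≤ 32 / T :=
      div_le_div_of_nonneg_left (by norm_num) hTpos hmT
    linarith
  -- put it together
  calc P (E1 ∪ (E0 ∪ ⋃ i ∈ Finset.range n, E2 i))
      ≤ P E1 + (P E0 + P (⋃ i ∈ Finset.range n, E2 i)) :=
        le_trans (measure_union_le _ _) (add_le_add le_rfl (measure_union_le _ _))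
    _ ≤ ENNReal.ofReal ((n:ℝ) * gTail A) + (ENNReal.ofReal ((1 - p) ^ n)
        + ENNReal.ofReal ((n:ℝ) * (p * (1 - p) ^ (n - 1)))) :=
        add_le_add hPE1 (add_le_add hPE0.le hPU)
    _ = ENNReal.ofReal ((n:ℝ) * gTail A
        + ((1 - p) ^ n + (n:ℝ) * (p * (1 - p) ^ (n - 1)))) := by
        have hx1 : (0:ℝ) ≤ (n:ℝ) * (p * (1 - p) ^ (n - 1)) :=
          mul_nonneg (Nat.cast_nonneg n) (mul_nonneg hp0 (pow_nonneg h1p _))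
        rw [← ENNReal.ofReal_add (pow_nonneg h1p n) hx1,
          ← ENNReal.ofReal_add (mul_nonneg (Nat.cast_nonneg n) (gTail_nonneg A))
            (add_nonneg (pow_nonneg h1p n) hx1)]
    _ ≤ ENNReal.ofReal δ := by
        apply ENNReal.ofReal_le_ofReal
        linarith
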